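/- Let m ≥ 3, n = 2^m - 1, and let h satisfy 1 ≤ h ≤ (m-1)/2 if m is odd and 1 ≤ h ≤ (m-2)/2 if m is even. Then for any two distinct odd integers i, j in {1, ..., 2^h - 1}, there is no u with 0 ≤ u ≤ m-1 such that i·2^u ≡ j (mod n). That is, distinct odd integers below 2^h lie in distinct 2-cyclotomic cosets modulo n. -/

import Mathlib

theorem stmt8 (m h n : ℕ) (hm : 3 ≤ m) (h1 : 1 ≤ h)
    (hodd : Odd m → h ≤ (m - 1) / 2) (heven : Even m → h ≤ (m - 2) / 2)
    (hn : n = 2 ^ m - 1) :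
    ∀ i j : ℕ, Odd i → Odd j → 1 ≤ i → i ≤ 2 ^ h - 1 → 1 ≤ j → j ≤ 2 ^ h - 1 →
      i ≠ j → ¬ ∃ u, u ≤ m - 1 ∧ i * 2 ^ u ≡ j [MOD n] := by
  -- First: 2*h ≤ m - 1
  have h2h : 2 * h ≤ m - 1 := by
    rcases Nat.even_or_odd m with he | ho
    · have := heven he
      have : 2 * h ≤ 2 * ((m - 2) / 2) := by omega
      have h3 : 2 * ((m - 2) / 2) ≤ m - 2 := Nat.mul_div_le _ _
      omega
    · have := hodd ho
      obtain ⟨k, hk⟩ := ho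
      omega
  have hmpos : 1 ≤ 2 ^ m := Nat.one_le_two_pow
  have hnn : n + 1 = 2 ^ m := by omega
  have hnge : 7 ≤ n := by
    have : 2 ^ 3 ≤ 2 ^ m := Nat.pow_le_pow_right (by norm_num) hm
    omega
  have hpow1 : (2 : ℕ) ^ m ≡ 1 [MOD n] := by
    rw [← hnn]
    calc (n + 1) % n = 1 % n := Nat.add_mod_left n 1
    _ = 1 % n := rfl
  intro i j hoi hoj hi1 hih hj1 hjh hij ⟨u, hu, hcong⟩
  -- bounds
  have hhm : h ≤ m - 1 := by omega
  have hpowh : 2 ^ h ≤ 2 ^ (m - 1) := Nat.pow_le_pow_right (by norm_num) hhm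
  have hpowm : 2 ^ (m - 1) * 2 = 2 ^ m := by
    rw [← pow_succ]; congr 1; omega
  have hiltn : i < n := by omega
  have hjltn : j < n := by omega
  rcases Nat.eq_zero_or_pos u with rfl | hu1
  · simp at hcong
    have := hcong
    unfold Nat.ModEq at this
    rw [Nat.mod_eq_of_lt hiltn, Nat.mod_eq_of_lt hjltn] at this
    exact hij this
  by_cases hc : h + u ≤ m
  · -- i * 2^u < n
    have hb : i * 2 ^ u ≤ (2 ^ h - 1) * 2 ^ u :=
      Nat.mul_le_mul_right _ hih
    have hb2 : (2 ^ h - 1) * 2 ^ u = 2 ^ (h + u) - 2 ^ u := by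
      rw [Nat.sub_mul, one_mul, pow_add]
    have hb3 : 2 ^ (h + u) ≤ 2 ^ m := Nat.pow_le_pow_right (by norm_num) hc
    have hb4 : 2 ≤ 2 ^ u := by
      calc (2:ℕ) = 2 ^ 1 := rfl
      _ ≤ 2 ^ u := Nat.pow_le_pow_right (by norm_num) hu1
    have hlt : i * 2 ^ u < n := by omega
    have heq : i * 2 ^ u = j := by
      have := hcong
      unfold Nat.ModEq at this
      rwa [Nat.mod_eq_of_lt hlt, Nat.mod_eq_of_lt hjltn] at this
    have : Even (i * 2 ^ u) := by
      refine (Nat.even_mul).2 (Or.inr ?_)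
      exact (Nat.even_pow).2 ⟨even_two, by omega⟩
    rw [heq] at this
    exact (Nat.not_even_iff_odd.mpr hoj) this
  · -- multiply by 2^(m-u)
    set v := m - u with hv
    have hv1 : 1 ≤ v := by omega
    have hvh : v ≤ h - 1 := by omega
    have hcong2 : i * 2 ^ u * 2 ^ v ≡ j * 2 ^ v [MOD n] :=
      hcong.mul_right _
    have hE : i * 2 ^ u * 2 ^ v = i * 2 ^ m := by
      rw [mul_assoc, ← pow_add]
      congr 2
      omega
    rw [hE] at hcong2
    have hcong3 : i * 2 ^ m ≡ i * 1 [MOD n] := Nat.ModEq.mul_left _ hpow1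
    have hcong4 : i ≡ j * 2 ^ v [MOD n] := by
      have := hcong3.symm.trans hcong2
      simpa using this
    -- bound j * 2^v
    have hb : j * 2 ^ v ≤ (2 ^ h - 1) * 2 ^ (h - 1) :=
      Nat.mul_le_mul hjh (Nat.pow_le_pow_right (by norm_num) hvh)
    have hb2 : (2 ^ h - 1) * 2 ^ (h - 1) < 2 ^ (h + (h - 1)) := by
      rw [pow_add]
      have hp : 0 < 2 ^ (h - 1) := Nat.pow_pos (by norm_num)
      have h2hpos : 1 ≤ 2 ^ h := Nat.one_le_two_pow
      exact mul_lt_mul_of_pos_right (by omega) hp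
    have hb3 : 2 ^ (h + (h - 1)) ≤ 2 ^ (m - 2) := by
      apply Nat.pow_le_pow_right (by norm_num)
      omega
    have hb4 : 2 ^ (m - 2) < 2 ^ m := Nat.pow_lt_pow_right (by norm_num) (by omega)
    have hlt : j * 2 ^ v < n := by omega
    have heq : i = j * 2 ^ v := by
      have := hcong4
      unfold Nat.ModEq at this
      rwa [Nat.mod_eq_of_lt hiltn, Nat.mod_eq_of_lt hlt] at this
    have : Even (j * 2 ^ v) := by
      refine (Nat.even_mul).2 (Or.inr ?_)
      exact (Nat.even_pow).2 ⟨even_two, by omega⟩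
    rw [← heq] at this
    exact (Nat.not_even_iff_odd.mpr hoi) this
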